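/- Let k₂(t,s) := (1/6)·s(1−t)(2t−s²−t²) for s ≤ t and k₂(t,s) := (1/6)·t(1−s)(2s−t²−s²) for s > t. Define Φ₂₀(s) := (√3/27)·s·(1−s²)^{3/2} for 0 ≤ s ≤ 1/2 and Φ₂₀(s) := (√3/27)·(1−s)·s^{3/2}·(2−s)^{3/2} for 1/2 < s ≤ 1. Then 0 ≤ k₂(t,s) ≤ Φ₂₀(s) for all t, s ∈ [0,1]. -/
import Mathlib


open Set MeasureTheory

/-- The Green's function of `u'''' = g` on `(0,1)` with
`u(0) = u(1) = u''(0) = u''(1) = 0` (simply supported beam). -/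
noncomputable def k2 (t s : ℝ) : ℝ :=
  if s ≤ t then (1 / 6) * (s * (1 - t) * (2 * t - s ^ 2 - t ^ 2))
  else (1 / 6) * (t * (1 - s) * (2 * s - t ^ 2 - s ^ 2))

/-- The dominating function `Φ₂₀`. -/
noncomputable def Phi20 (s : ℝ) : ℝ :=
  if s ≤ 1 / 2 then (Real.sqrt 3 / 27) * s * (1 - s ^ 2) ^ ((3:ℝ) / 2)
  else (Real.sqrt 3 / 27) * (1 - s) * s ^ ((3:ℝ) / 2) * (2 - s) ^ ((3:ℝ) / 2)

lemma cube_ineq (u a : ℝ) (hu : 0 ≤ u) (ha : 0 ≤ a) :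
    9 * (u * (a^2 - u^2)) ≤ 2 * Real.sqrt 3 * a^3 := by
  set w := Real.sqrt 3 with hw
  have h3 : w^2 = 3 := Real.sq_sqrt (by norm_num)
  have hs3 : 0 ≤ w := Real.sqrt_nonneg 3
  have hprod : 0 ≤ (3*u - w*a)^2 * (3*u + 2*(w*a)) :=
    mul_nonneg (sq_nonneg _) (by positivity)
  have e : (3*u - w*a)^2 * (3*u + 2*(w*a)) = 27*u^3 - 9*(w^2)*u*a^2 + 2*(w^2)*(w*a^3) := by
    ring
  rw [h3] at e
  linarith [e ▸ hprod]

lemma rpow_th {x : ℝ} (hx : 0 ≤ x) : x ^ ((3:ℝ)/2) = Real.sqrt x ^ 3 := by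
  rw [Real.sqrt_eq_rpow, ← Real.rpow_natCast (x ^ ((1:ℝ)/2)) 3, ← Real.rpow_mul hx]
  norm_num

/-- `0 ≤ k₂(t,s) ≤ Φ₂₀(s)` for all `t, s ∈ [0,1]`. -/
theorem stmt_11 :
    ∀ t ∈ Set.Icc (0:ℝ) 1, ∀ s ∈ Set.Icc (0:ℝ) 1,
      0 ≤ k2 t s ∧ k2 t s ≤ Phi20 s := by
  rintro t ⟨ht0, ht1⟩ s ⟨hs0, hs1⟩
  have hw : 0 ≤ Real.sqrt 3 := Real.sqrt_nonneg 3
  constructor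
  · -- nonnegativity
    unfold k2
    split_ifs with h
    · have h1 : 0 ≤ 2 * t - s ^ 2 - t ^ 2 := by nlinarith
      have : 0 ≤ s * (1 - t) := mul_nonneg hs0 (by linarith)
      nlinarith [mul_nonneg this h1]
    · push_neg at h
      have h1 : 0 ≤ 2 * s - t ^ 2 - s ^ 2 := by nlinarith
      have : 0 ≤ t * (1 - s) := mul_nonneg ht0 (by linarith)
      nlinarith [mul_nonneg this h1]
  · -- upper bound
    unfold k2 Phi20
    by_cases hs : s ≤ 1 / 2
    · -- Φ₂₀ branch: small s
      rw [if_pos hs]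
      set a := Real.sqrt (1 - s ^ 2) with ha
      have h1s : (0:ℝ) ≤ 1 - s ^ 2 := by nlinarith
      have ha2 : a ^ 2 = 1 - s ^ 2 := Real.sq_sqrt h1s
      have ha0 : 0 ≤ a := Real.sqrt_nonneg _
      rw [rpow_th h1s, ← ha]
      split_ifs with h
      · -- s ≤ t : direct cube bound with u = 1 - t
        have key := cube_ineq (1 - t) a (by linarith) ha0
        have expand : (1 - t) * (a ^ 2 - (1 - t) ^ 2) = (1 - t) * (2 * t - s ^ 2 - t ^ 2) := by
          rw [ha2]; ring
        rw [expand] at key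
        nlinarith [mul_le_mul_of_nonneg_left key hs0]
      · -- t < s ≤ 1/2 : k2 t s ≤ k2 s s ≤ bound
        push_neg at h
        have step1 : t * (1 - s) * (2 * s - t ^ 2 - s ^ 2) ≤ s * (1 - s) * (2 * s - 2 * s ^ 2) := by
          have hfac : 0 ≤ (s - t) * (2 * s - 2 * s ^ 2 - s * t - t ^ 2) := by
            apply mul_nonneg (by linarith)
            nlinarith
          nlinarith [mul_nonneg (by linarith : (0:ℝ) ≤ 1 - s) hfac]
        have key := cube_ineq (1 - s) a (by linarith) ha0
        have expand : (1 - s) * (a ^ 2 - (1 - s) ^ 2) = (1 - s) * (2 * s - 2 * s ^ 2) := by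
          rw [ha2]; ring
        rw [expand] at key
        nlinarith [mul_le_mul_of_nonneg_left key hs0]
    · -- Φ₂₀ branch: large s
      rw [if_neg hs]
      push_neg at hs
      set b := Real.sqrt (s * (2 - s)) with hb
      have hbs : (0:ℝ) ≤ s * (2 - s) := mul_nonneg hs0 (by linarith)
      have hb2 : b ^ 2 = s * (2 - s) := Real.sq_sqrt hbs
      have hb0 : 0 ≤ b := Real.sqrt_nonneg _
      have hmul : s ^ ((3:ℝ)/2) * (2 - s) ^ ((3:ℝ)/2) = b ^ 3 := by
        rw [rpow_th hs0, rpow_th (by linarith : (0:ℝ) ≤ 2 - s), hb,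
          Real.sqrt_mul hs0]
        ring
      have hrw : Real.sqrt 3 / 27 * (1 - s) * s ^ ((3:ℝ)/2) * (2 - s) ^ ((3:ℝ)/2)
          = Real.sqrt 3 / 27 * (1 - s) * b ^ 3 := by
        rw [mul_assoc, hmul]
      rw [hrw]
      split_ifs with h
      · -- s ≤ t, s > 1/2 : k2 t s ≤ k2 s s ≤ bound
        have step1 : s * (1 - t) * (2 * t - s ^ 2 - t ^ 2) ≤ s * (1 - s) * (2 * s - 2 * s ^ 2) := by
          have hfac : 0 ≤ (t - s) * (2 * (1 - s) - 2 * (1 - s) ^ 2 - (1 - s) * (1 - t) - (1 - t) ^ 2) := by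
            apply mul_nonneg (by linarith)
            nlinarith
          nlinarith [mul_nonneg hs0 hfac]
        have key := cube_ineq s b hs0 hb0
        have expand : s * (b ^ 2 - s ^ 2) = s * (2 * s - 2 * s ^ 2) := by
          rw [hb2]; ring
        rw [expand] at key
        nlinarith [mul_le_mul_of_nonneg_left key (by linarith : (0:ℝ) ≤ 1 - s)]
      · -- t < s : direct cube bound with u = t
        push_neg at h
        have key := cube_ineq t b ht0 hb0
        have expand : t * (b ^ 2 - t ^ 2) = t * (2 * s - t ^ 2 - s ^ 2) := by
          rw [hb2]; ring
        rw [expand] at key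
        nlinarith [mul_le_mul_of_nonneg_left key (by linarith : (0:ℝ) ≤ 1 - s)]
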